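/- (Chain rule for setwise directed information) Let A_1,…,A_n be random variables with finite alphabets and joint pmf P, factorized along the time order as P(a^n) = ∏_{i=1}^n P(a_i | a^{i-1}). For S ⊆ {1,…,n} with complement T = S^c, define the interventional law P(a^T | do(a^S)) := ∏_{i∈T} P(a_i | a^{i-1}), where in a^{i-1} the coordinates indexed by S are fixed to the intervened values a^S, and define the setwise directed information I(A^T→A^S) := E[log ( P(A^T | A^S) / P(A^T | do(A^S)) )]. Then I(A^{S^c}→A^S) = Σ_{i∈S} I(A^{S^c ∩ {1,…,i-1}}; A_i | A^{S ∩ {1,…,i-1}}). -/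

import Mathlib

open Finset

noncomputable section

-- Probability of the event `E` under the pmf `p` on a finite sample space `Ω`.
open Classical in
def pr {Ω : Type*} [Fintype Ω] (p : Ω → ℝ) (E : Ω → Prop) : ℝ :=
  ∑ ω, if E ω then p ω else 0

-- Shannon entropy `H(U)` (pointwise form).
def entropy {Ω α : Type*} [Fintype Ω] (p : Ω → ℝ) (U : Ω → α) : ℝ :=
  -∑ ω, p ω * Real.log (pr p (fun ω' => U ω' = U ω))

-- Conditional Shannon entropy `H(U | V)`.
def condEntropy {Ω α β : Type*} [Fintype Ω] (p : Ω → ℝ) (U : Ω → α) (V : Ω → β) : ℝ :=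
  -∑ ω, p ω * Real.log
      (pr p (fun ω' => U ω' = U ω ∧ V ω' = V ω) / pr p (fun ω' => V ω' = V ω))

-- Mutual information `I(U ; V)`.
def mutualInfo {Ω α β : Type*} [Fintype Ω] (p : Ω → ℝ) (U : Ω → α) (V : Ω → β) : ℝ :=
  ∑ ω, p ω * Real.log
      (pr p (fun ω' => U ω' = U ω ∧ V ω' = V ω) /
        (pr p (fun ω' => U ω' = U ω) * pr p (fun ω' => V ω' = V ω)))

-- Conditional mutual information `I(U ; V | W)`.
def condMutualInfo {Ω α β γ : Type*} [Fintype Ω] (p : Ω → ℝ)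
    (U : Ω → α) (V : Ω → β) (W : Ω → γ) : ℝ :=
  ∑ ω, p ω * Real.log
      ((pr p (fun ω' => U ω' = U ω ∧ V ω' = V ω ∧ W ω' = W ω) *
          pr p (fun ω' => W ω' = W ω)) /
        (pr p (fun ω' => U ω' = U ω ∧ W ω' = W ω) *
          pr p (fun ω' => V ω' = V ω ∧ W ω' = W ω)))

-- The prefix `(X_0, …, X_{i-1})` of a random sequence `X`.
def prefixSeq {Ω 𝒳 : Type*} (X : Ω → ℕ → 𝒳) (i : ℕ) : Ω → (Fin i → 𝒳) :=
  fun ω j => X ω (j : ℕ)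

-- Directed information `I(X^n → Y^n) = ∑_{i=1}^n I(X^i ; Y_i | Y^{i-1})` (0-indexed).
def directedInfo {Ω 𝒳 𝒴 : Type*} [Fintype Ω] (p : Ω → ℝ)
    (X : Ω → ℕ → 𝒳) (Y : Ω → ℕ → 𝒴) (n : ℕ) : ℝ :=
  ∑ i ∈ Finset.range n,
    condMutualInfo p (prefixSeq X (i + 1)) (fun ω => Y ω i) (prefixSeq Y i)

open Classical in
lemma pr_congr {Ω : Type*} [Fintype Ω] (p : Ω → ℝ) {E F : Ω → Prop}
    (h : ∀ ω, E ω ↔ F ω) : pr p E = pr p F := by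
  unfold pr; refine Finset.sum_congr rfl fun ω _ => ?_
  exact if_congr (h ω) rfl rfl

lemma pr_pos {Ω : Type*} [Fintype Ω] {p : Ω → ℝ} (hp0 : ∀ ω, 0 ≤ p ω)
    {E : Ω → Prop} {ω : Ω} (hω : 0 < p ω) (hE : E ω) : 0 < pr p E := by
  classical
  unfold pr
  refine Finset.sum_pos' (fun i _ => ?_) ⟨ω, Finset.mem_univ ω, ?_⟩
  · split <;> simp [hp0 i]
  · simpa [hE] using hω

lemma pr_true {Ω : Type*} [Fintype Ω] {p : Ω → ℝ} (hp1 : ∑ ω, p ω = 1)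
    {E : Ω → Prop} (h : ∀ ω, E ω) : pr p E = 1 := by
  unfold pr; simpa [h] using hp1

lemma funeq_iff {Ω : Type*} {𝒜 : ℕ → Type*} (A : (i : ℕ) → Ω → 𝒜 i)
    (F : Finset ℕ) (ω' ω : Ω) :
    ((fun j : {x // x ∈ F} => A j.1 ω') = fun j : {x // x ∈ F} => A j.1 ω) ↔
      ∀ j ∈ F, A j ω' = A j ω := by
  rw [funext_iff]
  exact ⟨fun h j hj => h ⟨j, hj⟩, fun h j => h j.1 j.2⟩

lemma telescope (g : Finset ℕ → ℝ) (hg : ∀ U, 0 < g U) (hg0 : g ∅ = 1)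
    (n : ℕ) (S : Finset ℕ) (hS : S ⊆ Finset.range n) :
    Real.log ((g (Finset.range n) / g S) /
        ∏ i ∈ Finset.range n \ S, g (Finset.range (i+1)) / g (Finset.range i)) =
      ∑ i ∈ S, Real.log ((g (Finset.range (i+1)) * g (S.filter (· < i))) /
        (g (Finset.range i) * g (S.filter (· < i+1)))) := by
  set M : ℕ → ℝ := fun i => Real.log (g (Finset.range i)) with hM
  set L : ℕ → ℝ := fun i => Real.log (g (S.filter (· < i))) with hL
  have hgne : ∀ U, g U ≠ 0 := fun U => (hg U).ne'
  have hprod : ∀ i ∈ Finset.range n \ S, g (Finset.range (i+1)) / g (Finset.range i) ≠ 0 :=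
    fun i _ => div_ne_zero (hgne _) (hgne _)
  have hlhs : Real.log ((g (Finset.range n) / g S) /
        ∏ i ∈ Finset.range n \ S, g (Finset.range (i+1)) / g (Finset.range i)) =
      (M n - Real.log (g S)) - ∑ i ∈ Finset.range n \ S, (M (i+1) - M i) := by
    rw [Real.log_div (div_ne_zero (hgne _) (hgne _)) (Finset.prod_ne_zero_iff.mpr hprod),
      Real.log_div (hgne _) (hgne _), Real.log_prod hprod]
    refine congrArg _ (Finset.sum_congr rfl fun i _ => ?_)
    rw [Real.log_div (hgne _) (hgne _)]
  have hrhs : ∀ i ∈ S, Real.log ((g (Finset.range (i+1)) * g (S.filter (· < i))) /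
        (g (Finset.range i) * g (S.filter (· < i+1)))) =
      (M (i+1) - M i) - (L (i+1) - L i) := by
    intro i _
    rw [Real.log_div (mul_ne_zero (hgne _) (hgne _)) (mul_ne_zero (hgne _) (hgne _)),
      Real.log_mul (hgne _) (hgne _), Real.log_mul (hgne _) (hgne _)]
    ring
  have hsub : ∑ i ∈ S, ((M (i+1) - M i) - (L (i+1) - L i)) =
      ∑ i ∈ S, (M (i+1) - M i) - ∑ i ∈ S, (L (i+1) - L i) := Finset.sum_sub_distrib _ _
  rw [hlhs, Finset.sum_congr rfl hrhs, hsub]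
  have hMtel : ∑ i ∈ Finset.range n, (M (i+1) - M i) = M n - M 0 :=
    Finset.sum_range_sub M n
  have hLtel : ∑ i ∈ Finset.range n, (L (i+1) - L i) = L n - L 0 :=
    Finset.sum_range_sub L n
  have hsplit : ∀ f : ℕ → ℝ, ∑ i ∈ Finset.range n \ S, f i + ∑ i ∈ S, f i =
      ∑ i ∈ Finset.range n, f i := fun f => Finset.sum_sdiff hS
  have hLzero : ∀ i ∈ Finset.range n \ S, L (i+1) - L i = 0 := by
    intro i hi
    have hiS : i ∉ S := (Finset.mem_sdiff.mp hi).2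
    have : S.filter (· < i+1) = S.filter (· < i) := by
      ext j
      simp only [Finset.mem_filter, Nat.lt_succ_iff]
      constructor
      · rintro ⟨hj, hle⟩
        refine ⟨hj, lt_of_le_of_ne hle ?_⟩
        rintro rfl; exact hiS hj
      · exact fun ⟨hj, hlt⟩ => ⟨hj, hlt.le⟩
    simp only [hL, this, sub_self]
  have hLS : ∑ i ∈ S, (L (i+1) - L i) = L n - L 0 := by
    rw [← hLtel, ← hsplit (fun i => L (i+1) - L i), Finset.sum_eq_zero hLzero, zero_add]
  have hM0 : M 0 = 0 := by simp [hM, hg0]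
  have hL0 : L 0 = 0 := by
    have h : S.filter (· < 0) = ∅ := by simp
    simp [hL, h, hg0]
  have hLn : L n = Real.log (g S) := by
    have h : S.filter (· < n) = S :=
      Finset.filter_true_of_mem fun i hi => Finset.mem_range.mp (hS hi)
    simp [hL, h]
  have hMS := hsplit (fun i => M (i+1) - M i)
  rw [hMtel] at hMS
  rw [hLS, hLn, hL0]
  linarith


/-- chain rule for setwise directed information: with `T = S^c`
inside `{1,…,n}`, the setwise directed information
`I(A^{S^c}→A^S) = E[log(P(A^T | A^S) / P(A^T | do(A^S)))]` satisfies
`I(A^{S^c}→A^S) = Σ_{i∈S} I(A^{S^c_{<i}}; A_i | A^{S_{<i}})`. -/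
theorem setwise_directedInfo_chain_rule
    {Ω : Type*} [Fintype Ω] {𝒜 : ℕ → Type*} [∀ i, Fintype (𝒜 i)]
    (p : Ω → ℝ) (hp0 : ∀ ω, 0 ≤ p ω) (hp1 : ∑ ω, p ω = 1)
    (A : (i : ℕ) → Ω → 𝒜 i) (n : ℕ) (S : Finset ℕ) (hS : S ⊆ Finset.range n) :
    ∑ ω, p ω * Real.log
        ((pr p (fun ω' => ∀ i < n, A i ω' = A i ω) /
            pr p (fun ω' => ∀ i ∈ S, A i ω' = A i ω)) /
          ∏ i ∈ Finset.range n \ S,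
            pr p (fun ω' => ∀ j ≤ i, A j ω' = A j ω) /
              pr p (fun ω' => ∀ j < i, A j ω' = A j ω)) =
      ∑ i ∈ S,
        condMutualInfo p
          (fun ω => fun j : {x // x ∈ (Finset.range n \ S).filter (· < i)} => A j.1 ω)
          (A i)
          (fun ω => fun j : {x // x ∈ S.filter (· < i)} => A j.1 ω) := by
  classical
  unfold condMutualInfo
  rw [Finset.sum_comm]
  refine Finset.sum_congr rfl fun ω _ => ?_
  rw [← Finset.mul_sum]
  rcases (hp0 ω).eq_or_lt with h0 | hω
  · rw [← h0]; ring
  congr 1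
  set g : Finset ℕ → ℝ := fun U => pr p (fun ω' => ∀ j ∈ U, A j ω' = A j ω) with hgdef
  have hgpos : ∀ U, 0 < g U := fun U => pr_pos hp0 hω (fun j _ => rfl)
  have hg0 : g ∅ = 1 := pr_true hp1 (by simp)
  have eLe : ∀ i : ℕ, pr p (fun ω' => ∀ j ≤ i, A j ω' = A j ω) = g (Finset.range (i+1)) :=
    fun i => pr_congr p fun ω' => by simp [Nat.lt_succ_iff]
  have eLt : ∀ i : ℕ, pr p (fun ω' => ∀ j < i, A j ω' = A j ω) = g (Finset.range i) :=
    fun i => pr_congr p fun ω' => by simp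
  have eS : pr p (fun ω' => ∀ i ∈ S, A i ω' = A i ω) = g S := rfl
  have hR : ∀ i ∈ S,
      Real.log
        ((pr p (fun ω' => (fun j : {x // x ∈ (Finset.range n \ S).filter (· < i)} => A j.1 ω')
              = (fun j : {x // x ∈ (Finset.range n \ S).filter (· < i)} => A j.1 ω) ∧ A i ω' = A i ω ∧
            (fun j : {x // x ∈ S.filter (· < i)} => A j.1 ω') = (fun j : {x // x ∈ S.filter (· < i)} => A j.1 ω)) *
          pr p (fun ω' => (fun j : {x // x ∈ S.filter (· < i)} => A j.1 ω') = (fun j : {x // x ∈ S.filter (· < i)} => A j.1 ω))) /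
        (pr p (fun ω' => (fun j : {x // x ∈ (Finset.range n \ S).filter (· < i)} => A j.1 ω')
              = (fun j : {x // x ∈ (Finset.range n \ S).filter (· < i)} => A j.1 ω) ∧
            (fun j : {x // x ∈ S.filter (· < i)} => A j.1 ω') = (fun j : {x // x ∈ S.filter (· < i)} => A j.1 ω)) *
          pr p (fun ω' => A i ω' = A i ω ∧
            (fun j : {x // x ∈ S.filter (· < i)} => A j.1 ω') = (fun j : {x // x ∈ S.filter (· < i)} => A j.1 ω)))) =
      Real.log ((g (Finset.range (i+1)) * g (S.filter (· < i))) /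
        (g (Finset.range i) * g (S.filter (· < i+1)))) := by
    intro i hi
    have hin : i < n := Finset.mem_range.mp (hS hi)
    have eUVW : pr p (fun ω' => (fun j : {x // x ∈ (Finset.range n \ S).filter (· < i)} => A j.1 ω')
            = (fun j : {x // x ∈ (Finset.range n \ S).filter (· < i)} => A j.1 ω) ∧ A i ω' = A i ω ∧
          (fun j : {x // x ∈ S.filter (· < i)} => A j.1 ω') = (fun j : {x // x ∈ S.filter (· < i)} => A j.1 ω)) =
        g (Finset.range (i+1)) := by
      refine pr_congr p fun ω' => ?_
      simp only [funeq_iff, Finset.mem_filter, Finset.mem_sdiff, Finset.mem_range]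
      constructor
      · rintro ⟨hU, hV, hW⟩ j hj
        rcases Nat.lt_succ_iff_lt_or_eq.mp hj with hj' | rfl
        · by_cases hjS : j ∈ S
          · exact hW j ⟨hjS, hj'⟩
          · exact hU j ⟨⟨hj'.trans hin, hjS⟩, hj'⟩
        · exact hV
      · intro h
        exact ⟨fun j hj => h j (Nat.lt_succ_of_lt hj.2), h i (Nat.lt_succ_self i),
          fun j hj => h j (Nat.lt_succ_of_lt hj.2)⟩
    have eW : pr p (fun ω' => (fun j : {x // x ∈ S.filter (· < i)} => A j.1 ω')
            = (fun j : {x // x ∈ S.filter (· < i)} => A j.1 ω)) = g (S.filter (· < i)) := by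
      refine pr_congr p fun ω' => ?_
      simp only [funeq_iff]
    have eUW : pr p (fun ω' => (fun j : {x // x ∈ (Finset.range n \ S).filter (· < i)} => A j.1 ω')
            = (fun j : {x // x ∈ (Finset.range n \ S).filter (· < i)} => A j.1 ω) ∧
          (fun j : {x // x ∈ S.filter (· < i)} => A j.1 ω') = (fun j : {x // x ∈ S.filter (· < i)} => A j.1 ω)) =
        g (Finset.range i) := by
      refine pr_congr p fun ω' => ?_
      simp only [funeq_iff, Finset.mem_filter, Finset.mem_sdiff, Finset.mem_range]
      constructor
      · rintro ⟨hU, hW⟩ j hj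
        by_cases hjS : j ∈ S
        · exact hW j ⟨hjS, hj⟩
        · exact hU j ⟨⟨hj.trans hin, hjS⟩, hj⟩
      · exact fun h => ⟨fun j hj => h j hj.2, fun j hj => h j hj.2⟩
    have eVW : pr p (fun ω' => A i ω' = A i ω ∧
          (fun j : {x // x ∈ S.filter (· < i)} => A j.1 ω') = (fun j : {x // x ∈ S.filter (· < i)} => A j.1 ω)) =
        g (S.filter (· < i+1)) := by
      refine pr_congr p fun ω' => ?_
      simp only [funeq_iff, Finset.mem_filter]
      constructor
      · rintro ⟨hV, hW⟩ j hj
        rcases Nat.lt_succ_iff_lt_or_eq.mp hj.2 with hj' | rfl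
        · exact hW j ⟨hj.1, hj'⟩
        · exact hV
      · exact fun h => ⟨h i ⟨hi, Nat.lt_succ_self i⟩,
          fun j hj => h j ⟨hj.1, Nat.lt_succ_of_lt hj.2⟩⟩
    rw [eUVW, eW, eUW, eVW]
  rw [Finset.sum_congr rfl hR, eS]
  simp only [eLe, eLt]
  exact telescope g hgpos hg0 n S hS
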